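/- Let E1 and E2 be equivalence relations on V and let F = l_{E2} ∘ u_{E1}, so that (E1, E2) is an LU-solution of F. Then (E1, E2) is the unique LU-solution of F if and only if both of the following hold: (i) for all x, y ∈ V with ¬(x E2 y), u_{E1}([x]_{E2}) ≠ u_{E1}([y]_{E2}); (ii) for every x ∈ V there exists z ∈ V such that [x]_{E2} ∩ [z]_{E1} has exactly one element. -/
import Mathlib


variable {V : Type*}

/-- The lower approximation of `X` w.r.t. the equivalence relation `E`:
all points whose `E`-class is contained in `X`. -/
def lowerApprox (E : Setoid V) (X : Set V) : Set V := {x | {y | E.r x y} ⊆ X}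

/-- The upper approximation of `X` w.r.t. the equivalence relation `E`:
all points whose `E`-class meets `X`. -/
def upperApprox (E : Setoid V) (X : Set V) : Set V := {x | ({y | E.r x y} ∩ X).Nonempty}

/-- The positive region of `D` with respect to `C`: the union over the
`D`-equivalence classes of their `C`-lower approximations. -/
def posRegion (C D : Setoid V) : Set V := ⋃ x : V, lowerApprox C {y | D.r x y}

/-- `(E1, E2)` is an LL-solution of `F` if `F X = l_{E2}(l_{E1}(X))` for all `X`. -/
def IsLLSolution (E1 E2 : Setoid V) (F : Set V → Set V) : Prop :=
  ∀ X : Set V, F X = lowerApprox E2 (lowerApprox E1 X)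

/-- `(E1, E2)` is the unique LL-solution of `F`. -/
def IsUniqueLLSolution (E1 E2 : Setoid V) (F : Set V → Set V) : Prop :=
  IsLLSolution E1 E2 F ∧
    ∀ E3 E4 : Setoid V, IsLLSolution E3 E4 F → E3 = E1 ∧ E4 = E2

/-- `(E1, E2)` is a UU-solution of `F` if `F X = u_{E2}(u_{E1}(X))` for all `X`. -/
def IsUUSolution (E1 E2 : Setoid V) (F : Set V → Set V) : Prop :=
  ∀ X : Set V, F X = upperApprox E2 (upperApprox E1 X)

/-- `(E1, E2)` is the unique UU-solution of `F`. -/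
def IsUniqueUUSolution (E1 E2 : Setoid V) (F : Set V → Set V) : Prop :=
  IsUUSolution E1 E2 F ∧
    ∀ E3 E4 : Setoid V, IsUUSolution E3 E4 F → E3 = E1 ∧ E4 = E2

/-- `(E1, E2)` is a UL-solution of `F` if `F X = u_{E2}(l_{E1}(X))` for all `X`. -/
def IsULSolution (E1 E2 : Setoid V) (F : Set V → Set V) : Prop :=
  ∀ X : Set V, F X = upperApprox E2 (lowerApprox E1 X)

/-- `(E1, E2)` is the unique UL-solution of `F`. -/
def IsUniqueULSolution (E1 E2 : Setoid V) (F : Set V → Set V) : Prop :=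
  IsULSolution E1 E2 F ∧
    ∀ E3 E4 : Setoid V, IsULSolution E3 E4 F → E3 = E1 ∧ E4 = E2

/-- `(E1, E2)` is an LU-solution of `F` if `F X = l_{E2}(u_{E1}(X))` for all `X`. -/
def IsLUSolution (E1 E2 : Setoid V) (F : Set V → Set V) : Prop :=
  ∀ X : Set V, F X = lowerApprox E2 (upperApprox E1 X)

/-- `(E1, E2)` is the unique LU-solution of `F`. -/
def IsUniqueLUSolution (E1 E2 : Setoid V) (F : Set V → Set V) : Prop :=
  IsLUSolution E1 E2 F ∧
    ∀ E3 E4 : Setoid V, IsLUSolution E3 E4 F → E3 = E1 ∧ E4 = E2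

lemma mem_lower' {E : Setoid V} {Y : Set V} {w : V} :
    w ∈ lowerApprox E Y ↔ {y | E.r w y} ⊆ Y := Iff.rfl

lemma sub_upper_iff' {E1 : Setoid V} {A X : Set V} :
    A ⊆ upperApprox E1 X ↔ upperApprox E1 A ⊆ upperApprox E1 X := by
  constructor
  · rintro h p ⟨q, hpq, hq⟩
    obtain ⟨m, hqm, hm⟩ := h hq
    exact ⟨m, E1.iseqv.trans hpq hqm, hm⟩
  · intro h a ha
    exact h ⟨a, E1.iseqv.refl a, ha⟩

lemma solution_of_cls' {E1 E E' : Setoid V}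
    (h : ∀ w, upperApprox E1 {y | E.r w y} = upperApprox E1 {y | E'.r w y}) :
    ∀ X, lowerApprox E (upperApprox E1 X) = lowerApprox E' (upperApprox E1 X) := by
  intro X
  ext w
  rw [mem_lower', mem_lower', sub_upper_iff', h w, ← sub_upper_iff']

lemma cls_of_solution' {E1 E2 E4 : Setoid V}
    (h : ∀ X, lowerApprox E2 (upperApprox E1 X) = lowerApprox E4 (upperApprox E1 X)) :
    ∀ w, upperApprox E1 {y | E2.r w y} = upperApprox E1 {y | E4.r w y} := by
  have key : ∀ (A B : Setoid V),
      (∀ X, lowerApprox A (upperApprox E1 X) = lowerApprox B (upperApprox E1 X)) →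
      ∀ w, upperApprox E1 {y | B.r w y} ⊆ upperApprox E1 {y | A.r w y} := by
    intro A B hAB w
    have h1 : w ∈ lowerApprox A (upperApprox E1 {y | A.r w y}) := by
      rw [mem_lower']; intro y hy; exact ⟨y, E1.iseqv.refl y, hy⟩
    rw [hAB] at h1
    rw [mem_lower'] at h1
    exact sub_upper_iff'.mp h1
  intro w
  exact Set.Subset.antisymm (key E4 E2 (fun X => (h X).symm) w) (key E2 E4 h w)

lemma lower_univ' {E : Setoid V} {Y : Set V} :
    lowerApprox E Y = Set.univ ↔ Y = Set.univ := by
  constructor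
  · intro h
    rw [Set.eq_univ_iff_forall]
    intro y
    have : y ∈ lowerApprox E Y := h ▸ Set.mem_univ y
    exact this (E.iseqv.refl y)
  · rintro rfl
    rw [Set.eq_univ_iff_forall]
    intro w
    exact fun y _ => Set.mem_univ y

lemma first_eq' {E1 E2 E3 E4 : Setoid V}
    (hs : ∀ X, lowerApprox E2 (upperApprox E1 X) = lowerApprox E4 (upperApprox E3 X)) :
    E3 = E1 := by
  have huniv : ∀ X : Set V, (upperApprox E1 X = Set.univ ↔ upperApprox E3 X = Set.univ) := by
    intro X
    constructor
    · intro h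
      have h2 := hs X
      rw [h] at h2
      apply (lower_univ' (E := E4)).mp
      rw [← h2]
      exact (lower_univ' (E := E2)).mpr rfl
    · intro h
      have h2 := hs X
      rw [h] at h2
      apply (lower_univ' (E := E2)).mp
      rw [h2]
      exact (lower_univ' (E := E4)).mpr rfl
  have contain : ∀ (A B : Setoid V),
      (∀ X : Set V, upperApprox A X = Set.univ → upperApprox B X = Set.univ) →
      ∀ v, ∃ p, ∀ y, A.r p y → B.r v y := by
    intro A B hAB v
    have h1 : upperApprox B {w | ¬ B.r v w} ≠ Set.univ := by
      intro h
      have hv : v ∈ upperApprox B {w | ¬ B.r v w} := h ▸ Set.mem_univ v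
      obtain ⟨y, hy, hy2⟩ := hv
      exact hy2 hy
    have h3 : upperApprox A {w | ¬ B.r v w} ≠ Set.univ := fun h => h1 (hAB _ h)
    have hex : ∃ p, p ∉ upperApprox A {w | ¬ B.r v w} := by
      by_contra hc
      push_neg at hc
      exact h3 (Set.eq_univ_of_forall hc)
    obtain ⟨p, hp⟩ := hex
    refine ⟨p, fun y hy => ?_⟩
    by_contra hvy
    exact hp ⟨y, hy, hvy⟩
  have c13 : ∀ v, ∃ p, ∀ y, E3.r p y → E1.r v y :=
    contain E3 E1 (fun X h => (huniv X).mpr h)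
  have c31 : ∀ v, ∃ p, ∀ y, E1.r p y → E3.r v y :=
    contain E1 E3 (fun X h => (huniv X).mp h)
  apply Setoid.ext
  intro v u
  obtain ⟨p, hp⟩ := c13 v
  obtain ⟨q, hq⟩ := c31 p
  have hvq : E1.r v q := hp q (hq q (E1.iseqv.refl q))
  have hsub : ∀ y, E1.r v y → E3.r p y :=
    fun y hy => hq y (E1.iseqv.trans (E1.iseqv.symm hvq) hy)
  have hpv : E3.r p v := hsub v (E1.iseqv.refl v)
  constructor
  · intro h; exact hp u (E3.iseqv.trans hpv h)
  · intro h; exact E3.iseqv.trans (E3.iseqv.symm hpv) (hsub u h)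

def mergeSetoid (E2 : Setoid V) (x y : V) : Setoid V where
  r w v := E2.r w v ∨ ((E2.r x w ∨ E2.r y w) ∧ (E2.r x v ∨ E2.r y v))
  iseqv := by
    refine ⟨fun a => Or.inl (E2.iseqv.refl a), ?_, ?_⟩
    · rintro a b (h | ⟨h1, h2⟩)
      exacts [Or.inl (E2.iseqv.symm h), Or.inr ⟨h2, h1⟩]
    · have Qc : ∀ a b : V, E2.r a b → (E2.r x b ∨ E2.r y b) → (E2.r x a ∨ E2.r y a) := by
        rintro a b hab (h | h)
        exacts [Or.inl (E2.iseqv.trans h (E2.iseqv.symm hab)),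
          Or.inr (E2.iseqv.trans h (E2.iseqv.symm hab))]
      rintro a b c (h | ⟨h1, h2⟩) (h' | ⟨h1', h2'⟩)
      · exact Or.inl (E2.iseqv.trans h h')
      · exact Or.inr ⟨Qc a b h h1', h2'⟩
      · exact Or.inr ⟨h1, Qc c b (E2.iseqv.symm h') h2⟩
      · exact Or.inr ⟨h1, h2'⟩

lemma merge_cls' {E1 E2 : Setoid V} {x y : V}
    (hu : upperApprox E1 {z | E2.r x z} = upperApprox E1 {z | E2.r y z}) :
    ∀ w, upperApprox E1 {v | E2.r w v} = upperApprox E1 {v | (mergeSetoid E2 x y).r w v} := by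
  intro w
  ext p
  constructor
  · rintro ⟨q, hpq, hq⟩
    exact ⟨q, hpq, Or.inl hq⟩
  · rintro ⟨q, hpq, (h | ⟨hw, hq⟩)⟩
    · exact ⟨q, hpq, h⟩
    · rcases hw with hw | hw <;> rcases hq with hq | hq
      · exact ⟨q, hpq, E2.iseqv.trans (E2.iseqv.symm hw) hq⟩
      · have hp : p ∈ upperApprox E1 {z | E2.r y z} := ⟨q, hpq, hq⟩
        rw [← hu] at hp
        obtain ⟨q', h1, h2⟩ := hp
        exact ⟨q', h1, E2.iseqv.trans (E2.iseqv.symm hw) h2⟩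
      · have hp : p ∈ upperApprox E1 {z | E2.r x z} := ⟨q, hpq, hq⟩
        rw [hu] at hp
        obtain ⟨q', h1, h2⟩ := hp
        exact ⟨q', h1, E2.iseqv.trans (E2.iseqv.symm hw) h2⟩
      · exact ⟨q, hpq, E2.iseqv.trans (E2.iseqv.symm hw) hq⟩

noncomputable def pick [Nonempty V] (T : Set V) : V := Classical.epsilon (· ∈ T)

lemma pick_mem' [Nonempty V] {T : Set V} (h : T.Nonempty) : pick T ∈ T :=
  Classical.epsilon_spec h

theorem stmt_19 [Fintype V] [Nonempty V] (E1 E2 : Setoid V) :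
    IsUniqueLUSolution E1 E2 (fun X => lowerApprox E2 (upperApprox E1 X)) ↔
      ((∀ x y : V, ¬ E2.r x y →
          upperApprox E1 {z | E2.r x z} ≠ upperApprox E1 {z | E2.r y z}) ∧
       (∀ x : V, ∃ z : V, ∃ a : V, {w | E2.r x w} ∩ {w | E1.r z w} = {a})) := by

  constructor
  · rintro ⟨-, huniq⟩
    constructor
    · intro x y hxy hu
      have hsol : IsLUSolution E1 (mergeSetoid E2 x y)
          (fun X => lowerApprox E2 (upperApprox E1 X)) := fun X =>
        solution_of_cls' (merge_cls' hu) X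
      have hE4 := (huniq E1 (mergeSetoid E2 x y) hsol).2
      have hxy' : (mergeSetoid E2 x y).r x y :=
        Or.inr ⟨Or.inl (E2.iseqv.refl x), Or.inr (E2.iseqv.refl y)⟩
      rw [hE4] at hxy'
      exact hxy hxy'
    · intro x
      by_contra hcon
      push_neg at hcon
      set S : Set V := {w | E2.r x w} with hS
      set T : V → Set V := fun v => {y | E1.r v y} ∩ S with hT
      set f : V → V := fun v => pick (T v) with hf
      have fcongr : ∀ v v', E1.r v v' → f v = f v' := by
        intro v v' h
        have hTe : T v = T v' := by
          apply congrArg (· ∩ S)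
          ext y
          exact ⟨fun hy => E1.iseqv.trans (E1.iseqv.symm h) hy,
                 fun hy => E1.iseqv.trans h hy⟩
        simp only [hf, hTe]
      set P : V → Prop := fun v => v ∈ S ∧ f v = v with hP
      set E4 : Setoid V := ⟨fun w v => E2.r w v ∧ (P w ↔ P v),
        ⟨fun a => ⟨E2.iseqv.refl a, Iff.rfl⟩,
         fun h => ⟨E2.iseqv.symm h.1, h.2.symm⟩,
         fun h h' => ⟨E2.iseqv.trans h.1 h'.1, h.2.trans h'.2⟩⟩⟩ with hE4def
      have two : ∀ v, (T v).Nonempty → ∃ q ∈ T v, q ≠ f v := by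
        intro v hv
        by_contra hc
        push_neg at hc
        apply hcon v (f v)
        rw [Set.inter_comm]
        apply Set.Subset.antisymm
        · intro q hq; exact hc q hq
        · intro q hq
          rw [Set.mem_singleton_iff] at hq
          exact hq ▸ pick_mem' hv
      have hcls : ∀ w, upperApprox E1 {v | E2.r w v} = upperApprox E1 {v | E4.r w v} := by
        intro w
        ext p
        constructor
        · rintro ⟨q, hpq, hq⟩
          by_cases hxw : E2.r x w
          · have hne : (T p).Nonempty := ⟨q, hpq, E2.iseqv.trans hxw hq⟩
            have hr : f p ∈ T p := pick_mem' hne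
            have hr1 : E1.r p (f p) := hr.1
            have hr2 : f p ∈ S := hr.2
            have hfr : f (f p) = f p := (fcongr p (f p) hr1).symm
            have hPr : P (f p) := ⟨hr2, hfr⟩
            by_cases hPw : P w
            · exact ⟨f p, hr1, ⟨E2.iseqv.trans (E2.iseqv.symm hxw) hr2,
                iff_of_true hPw hPr⟩⟩
            · obtain ⟨q2, hq2T, hq2ne⟩ := two p hne
              have hfq2 : f q2 = f p := (fcongr p q2 hq2T.1).symm
              have hPq2 : ¬ P q2 := fun hPq => hq2ne (hPq.2.symm.trans hfq2)
              exact ⟨q2, hq2T.1, ⟨E2.iseqv.trans (E2.iseqv.symm hxw) hq2T.2,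
                iff_of_false hPw hPq2⟩⟩
          · refine ⟨q, hpq, hq, iff_of_false (fun hPw => hxw hPw.1) (fun hPq => ?_)⟩
            exact hxw (E2.iseqv.trans hPq.1 (E2.iseqv.symm hq))
        · rintro ⟨q, hpq, hq, -⟩
          exact ⟨q, hpq, hq⟩
      have hsol : IsLUSolution E1 E4 (fun X => lowerApprox E2 (upperApprox E1 X)) :=
        fun X => solution_of_cls' hcls X
      have hE4 := (huniq E1 E4 hsol).2
      have hxT : x ∈ T x := ⟨E1.iseqv.refl x, E2.iseqv.refl x⟩
      have hne : (T x).Nonempty := ⟨x, hxT⟩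
      obtain ⟨q2, hq2T, hq2ne⟩ := two x hne
      have hr : f x ∈ T x := pick_mem' hne
      have hr1 : E1.r x (f x) := hr.1
      have hr2 : f x ∈ S := hr.2
      have hfr : f (f x) = f x := (fcongr x (f x) hr1).symm
      have hPr : P (f x) := ⟨hr2, hfr⟩
      have hfq2 : f q2 = f x := (fcongr x q2 hq2T.1).symm
      have hPq2 : ¬ P q2 := fun hPq => hq2ne (hPq.2.symm.trans hfq2)
      have h2 : E2.r (f x) q2 := E2.iseqv.trans (E2.iseqv.symm hr2) hq2T.2
      have h4 : E4.r (f x) q2 := by rw [hE4]; exact h2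
      exact hPq2 (h4.2.mp hPr)
  · rintro ⟨cond1, cond2⟩
    refine ⟨fun X => rfl, ?_⟩
    intro E3 E4 hsol
    have hs : ∀ X, lowerApprox E2 (upperApprox E1 X) = lowerApprox E4 (upperApprox E3 X) :=
      hsol
    have hE3 : E3 = E1 := first_eq' hs
    rw [hE3] at hs
    refine ⟨hE3, ?_⟩
    have hcls := cls_of_solution' hs
    have h42 : ∀ a b, E4.r a b → E2.r a b := by
      intro a b h
      by_contra hab
      apply cond1 a b hab
      have hcl : {y | E4.r a y} = {y | E4.r b y} := by
        ext y
        exact ⟨fun h2 => E4.iseqv.trans (E4.iseqv.symm h) h2,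
               fun h2 => E4.iseqv.trans h h2⟩
      rw [hcls a, hcls b, hcl]
    have h24 : ∀ a b, E2.r a b → E4.r a b := by
      intro a b hab
      obtain ⟨z, c, hzc⟩ := cond2 a
      have hc : E2.r a c ∧ E1.r z c := by
        have hm : c ∈ ({w | E2.r a w} ∩ {w | E1.r z w}) := hzc ▸ rfl
        exact hm
      have key : ∀ w, E2.r a w → E4.r w c := by
        intro w hw
        have hz : z ∈ upperApprox E1 {y | E2.r w y} :=
          ⟨c, hc.2, E2.iseqv.trans (E2.iseqv.symm hw) hc.1⟩
        rw [hcls w] at hz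
        obtain ⟨q, hzq, hwq⟩ := hz
        have hq : q ∈ ({w | E2.r a w} ∩ {w | E1.r z w}) :=
          ⟨E2.iseqv.trans hw (h42 _ _ hwq), hzq⟩
        rw [hzc, Set.mem_singleton_iff] at hq
        exact hq ▸ hwq
      exact E4.iseqv.trans (key a (E2.iseqv.refl a)) (E4.iseqv.symm (key b hab))
    exact Setoid.ext fun a b => ⟨h42 a b, h24 a b⟩
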